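/- In the run DAG G of a finite Büchi automaton over a fixed infinite word, every vertex has rank at most ω² under the transfinite ranking construction: define G₀ = G, G_{α+1} = G_α minus its dead ends, and for limit λ, G_λ = H_λ minus the vertices inert in H_λ, where H_α = ⋂_{β<α} G_β; then a vertex's rank is sup{α < ω² : vertex ∈ H_α}, and this sup is well defined (H_{ω²} contains a vertex iff that vertex lies on a fair path). -/

import Mathlib

open Ordinal in
/-- The transfinite sequence of DAGs: `G 0 = G0`, successor stages remove dead ends,
limit stages remove the vertices that are inert in `H λ = ⋂_{β<λ} G β`. -/
noncomputable def Gseq {V : Type*} (E : V → V → Prop) (acc : V → Prop) (G0 : Set V) :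
    Ordinal → Set V := fun o =>
  Ordinal.limitRecOn o G0
    (fun _ Gα => {v ∈ Gα | ∃ u, E v u ∧ u ∈ Gα})
    (fun o _ ih =>
      {v | (∀ β (h : β < o), v ∈ ih β h) ∧
        ∃ u, Relation.ReflTransGen (fun x y => E x y ∧ ∀ β (h : β < o), y ∈ ih β h) v u ∧
          acc u})

/-- `H α = ⋂_{β<α} G β`. -/
noncomputable def Hseq {V : Type*} (E : V → V → Prop) (acc : V → Prop) (G0 : Set V)
    (o : Ordinal) : Set V :=
  {v | ∀ β < o, v ∈ Gseq E acc G0 β}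

/-- The rank of a vertex: `sup {α < ω² | v ∈ H α}`. -/
noncomputable def rankOf {V : Type*} (E : V → V → Prop) (acc : V → Prop) (G0 : Set V)
    (v : V) : Ordinal :=
  sSup {α | α < Ordinal.omega0 * Ordinal.omega0 ∧ v ∈ Hseq E acc G0 α}

/-- `floor α`: the largest limit ordinal (0 counting as a limit) strictly below `α`. -/
noncomputable def ofloor (α : Ordinal) : Ordinal :=
  sSup {l : Ordinal | (l = 0 ∨ Order.IsSuccLimit l) ∧ l < α}

/-- Edges of the run DAG of an automaton over the word `w`. -/
def dagEdge {Q A : Type*} (Δ : Q → A → Q → Prop) (w : ℕ → A) :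
    Q × ℕ → Q × ℕ → Prop := fun v u => u.2 = v.2 + 1 ∧ Δ v.1 (w v.2) u.1

/-- The run DAG from state `q0` over word `w`: all vertices reachable from `(q0, 0)`. -/
def runDag {Q A : Type*} (Δ : Q → A → Q → Prop) (w : ℕ → A) (q0 : Q) : Set (Q × ℕ) :=
  {v | Relation.ReflTransGen (dagEdge Δ w) (q0, 0) v}

/-- A vertex of the run DAG is accepting iff its state component is accepting. -/
def dagAcc {Q : Type*} (F : Set Q) : Q × ℕ → Prop := fun v => v.1 ∈ F

open Ordinal

section general
variable {V : Type*} {E : V → V → Prop} {acc : V → Prop} {G0 : Set V}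

lemma Gseq_zero : Gseq E acc G0 0 = G0 := Ordinal.limitRecOn_zero ..

lemma Gseq_succ (α : Ordinal) :
    Gseq E acc G0 (α + 1) = {v ∈ Gseq E acc G0 α | ∃ u, E v u ∧ u ∈ Gseq E acc G0 α} := by
  rw [Ordinal.add_one_eq_succ, Gseq, Ordinal.limitRecOn_succ]; rfl

lemma Gseq_limit {o : Ordinal} (ho : Order.IsSuccLimit o) :
    Gseq E acc G0 o = {v | v ∈ Hseq E acc G0 o ∧
      ∃ u, Relation.ReflTransGen (fun x y => E x y ∧ y ∈ Hseq E acc G0 o) v u ∧ acc u} := by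
  rw [Gseq, Ordinal.limitRecOn_limit _ _ _ _ ho]; rfl

lemma Gseq_antitone : ∀ {α β : Ordinal}, β ≤ α → Gseq E acc G0 α ⊆ Gseq E acc G0 β := by
  intro α
  induction α using Ordinal.induction with
  | _ α ih =>
    intro β hβ
    rcases eq_or_lt_of_le hβ with rfl | hlt
    · exact fun _ h => h
    rcases Ordinal.zero_or_succ_or_isSuccLimit α with rfl | ⟨γ, rfl⟩ | hl
    · exact absurd hlt (by simp : ¬ β < 0)
    · intro v hv
      have h1 : Gseq E acc G0 (Order.succ γ) ⊆ Gseq E acc G0 γ := by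
        rw [← Ordinal.add_one_eq_succ, Gseq_succ]; exact fun v hv => hv.1
      exact ih γ (Order.lt_succ γ) (Order.le_of_lt_succ hlt) (h1 hv)
    · intro v hv
      rw [Gseq_limit hl] at hv
      exact hv.1 β hlt

lemma Hseq_antitone {α β : Ordinal} (h : β ≤ α) : Hseq E acc G0 α ⊆ Hseq E acc G0 β :=
  fun _ hv γ hγ => hv γ (lt_of_lt_of_le hγ h)

lemma Gseq_subset_Hseq {o : Ordinal} : Gseq E acc G0 o ⊆ Hseq E acc G0 o :=
  fun v hv β hβ => Gseq_antitone hβ.le hv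

end general


section paths
variable {V : Type*} (E : V → V → Prop) (S : Set V)

def hasPath : ℕ → V → Prop
  | 0, v => v ∈ S
  | (m+1), v => v ∈ S ∧ ∃ u, E v u ∧ hasPath m u

variable {E S}

lemma hasPath_mem {m : ℕ} {v : V} (h : hasPath E S m v) : v ∈ S := by
  cases m with
  | zero => exact h
  | succ m => exact h.1

lemma hasPath_mono : ∀ {m : ℕ} {v : V}, hasPath E S (m+1) v → hasPath E S m v := by
  intro m
  induction m with
  | zero => exact fun h => h.1
  | succ m ih =>
    rintro v ⟨hv, u, hu, hp⟩
    exact ⟨hv, u, hu, ih hp⟩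

lemma hasPath_le : ∀ {m k : ℕ}, k ≤ m → ∀ {v : V}, hasPath E S m v → hasPath E S k v := by
  intro m
  induction m with
  | zero => intro k hk v hp; rw [Nat.le_zero.mp hk]; exact hp
  | succ m ih =>
    intro k hk v hp
    rcases Nat.le_succ_iff.mp hk with h | rfl
    · exact ih h (hasPath_mono hp)
    · exact hp

/-- Pigeonhole over a finite set of successors. -/
lemma pigeon {I : Set V} (hI : I.Finite) (h : ∀ m : ℕ, ∃ u ∈ I, hasPath E S m u) :
    ∃ u ∈ I, ∀ m : ℕ, hasPath E S m u := by
  by_contra hc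
  push_neg at hc
  choose f hf using hc
  classical
  obtain ⟨u, huI, hup⟩ := h (hI.toFinset.sup (fun u => if hu : u ∈ I then f u hu else 0))
  have hfu : f u huI ≤ hI.toFinset.sup (fun u => if hu : u ∈ I then f u hu else 0) := by
    have h1 := Finset.le_sup (f := fun u => if hu : u ∈ I then f u hu else 0)
      (hI.mem_toFinset.mpr huI)
    simpa [huI] using h1
  exact hf u huI (hasPath_le hfu hup)

/-- choice-based iteration -/
lemma iterate_choice {T : Type*} (x0 : T) (R : T → T → Prop) (h : ∀ x, ∃ y, R x y) :
    ∃ g : ℕ → T, g 0 = x0 ∧ ∀ i, R (g i) (g (i+1)) := by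
  classical
  refine ⟨fun i => (fun x => Classical.choose (h x))^[i] x0, rfl, fun i => ?_⟩
  show R ((fun x => Classical.choose (h x))^[i] x0) ((fun x => Classical.choose (h x))^[i+1] x0)
  rw [Function.iterate_succ_apply']
  exact Classical.choose_spec (h _)
end paths

section general2
variable {V : Type*} {E : V → V → Prop} {acc : V → Prop} {G0 : Set V}

lemma Gseq_add_nat (β : Ordinal) :
    ∀ m : ℕ, Gseq E acc G0 (β + m) = {v | hasPath E (Gseq E acc G0 β) m v} := by
  intro m
  induction m with
  | zero => simp only [Nat.cast_zero, add_zero]; rfl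
  | succ m ih =>
    have : (β + (m+1 : ℕ)) = (β + m) + 1 := by push_cast; rw [add_assoc]
    rw [this, Gseq_succ, ih]
    ext v
    constructor
    · rintro ⟨hv, u, hvu, hu⟩
      exact ⟨hasPath_mem hv, u, hvu, hu⟩
    · rintro ⟨hv, u, hvu, hu⟩
      exact ⟨hasPath_mono ⟨hv, u, hvu, hu⟩, u, hvu, hu⟩

lemma Hseq_add_omega (β : Ordinal) {v : V} :
    v ∈ Hseq E acc G0 (β + omega0) ↔ ∀ m : ℕ, hasPath E (Gseq E acc G0 β) m v := by
  constructor
  · intro h m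
    have h1 : β + (m : Ordinal) < β + omega0 := by
      exact add_lt_add_right (nat_lt_omega0 m) β
    have := h _ h1
    rwa [Gseq_add_nat] at this
  · intro h γ hγ
    obtain ⟨d, hd, hle⟩ := (Ordinal.lt_add_iff omega0_ne_zero).mp hγ
    obtain ⟨m, rfl⟩ := Ordinal.lt_omega0.mp hd
    refine Gseq_antitone hle ?_
    rw [Gseq_add_nat]
    exact h m

/-- single-step dead-end freedom of `H (β+ω)`, given finite branching. -/
lemma Hseq_no_dead_end (hfin : ∀ v : V, {u | E v u}.Finite) (β : Ordinal) {v : V}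
    (hv : v ∈ Hseq E acc G0 (β + omega0)) :
    ∃ u, E v u ∧ u ∈ Hseq E acc G0 (β + omega0) := by
  rw [Hseq_add_omega] at hv
  have h : ∀ m : ℕ, ∃ u ∈ {u | E v u}, hasPath E (Gseq E acc G0 β) m u := by
    intro m
    obtain ⟨_, u, hvu, hu⟩ := hv (m+1)
    exact ⟨u, hvu, hu⟩
  obtain ⟨u, hvu, hu⟩ := pigeon (hfin v) h
  exact ⟨u, hvu, (Hseq_add_omega β).mpr hu⟩

end general2

open Relation

section rtg
variable {V : Type*}

lemma rtg_to_fun {R : V → V → Prop} {x u : V} (h : ReflTransGen R x u) :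
    ∃ (m : ℕ) (f : ℕ → V), f 0 = x ∧ f m = u ∧ ∀ i < m, R (f i) (f (i+1)) := by
  induction h using ReflTransGen.head_induction_on with
  | refl => exact ⟨0, fun _ => u, rfl, rfl, by omega⟩
  | head hab _ ih =>
    obtain ⟨m, f, hf0, hfm, hstep⟩ := ih
    rename_i a b _
    refine ⟨m+1, fun i => match i with | 0 => a | (j+1) => f j, rfl, hfm, ?_⟩
    intro i hi
    match i with
    | 0 => simpa [hf0] using hab
    | (j+1) => exact hstep j (by omega)

lemma chain_rtg' {R : V → V → Prop} (f : ℕ → V) {i m : ℕ} (him : i ≤ m)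
    (h : ∀ j, i ≤ j → j < m → R (f j) (f (j+1))) : ReflTransGen R (f i) (f m) := by
  induction m with
  | zero => rw [Nat.le_zero.mp him]
  | succ m ih =>
    rcases Nat.le_succ_iff.mp him with h' | rfl
    · exact (ih h' (fun j hj hjm => h j hj (by omega))).tail (h m h' (by omega))
    · rfl
end rtg

section limitlem
variable {V : Type*} {E : V → V → Prop} {acc : V → Prop} {G0 : Set V}




lemma Gseq_limit_mem {o : Ordinal} (ho : Order.IsSuccLimit o) {v : V} :
    v ∈ Gseq E acc G0 o ↔ v ∈ Hseq E acc G0 o ∧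
      ∃ u, ReflTransGen (fun x y => E x y ∧ y ∈ Hseq E acc G0 o) v u ∧ acc u := by
  rw [Gseq_limit ho]; rfl

lemma mem_Gseq_of_reach {o : Ordinal} (ho : Order.IsSuccLimit o) {x u : V} (hx : x ∈ Hseq E acc G0 o)
    (hp : ReflTransGen (fun a b => E a b ∧ b ∈ Hseq E acc G0 o) x u) (hu : acc u) :
    x ∈ Gseq E acc G0 o := (Gseq_limit_mem ho).mpr ⟨hx, u, hp, hu⟩

lemma Gseq_limit_reach {o : Ordinal} (ho : Order.IsSuccLimit o) {v : V} (hv : v ∈ Gseq E acc G0 o) :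
    ∃ u, ReflTransGen (fun a b => E a b ∧ b ∈ Gseq E acc G0 o) v u ∧ acc u := by
  obtain ⟨hvH, u, hp, hu⟩ := (Gseq_limit_mem ho).mp hv
  refine ⟨u, ?_, hu⟩
  clear hv hvH
  induction hp using ReflTransGen.head_induction_on with
  | refl => rfl
  | head hab hbu ih =>
    exact ih.head ⟨hab.1, mem_Gseq_of_reach ho hab.2 hbu hu⟩

/-- an inert vertex in a dead-end-free `H` yields an infinite inert path. -/
lemma inert_path {β : Ordinal} (hfin : ∀ v : V, {u | E v u}.Finite) {v : V}
    (hv : v ∈ Hseq E acc G0 (β + omega0)) (hvG : v ∉ Gseq E acc G0 (β + omega0)) :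
    ∃ ρ : ℕ → V, ρ 0 = v ∧ ∀ i, ρ i ∈ Hseq E acc G0 (β + omega0) ∧
      ρ i ∉ Gseq E acc G0 (β + omega0) ∧ E (ρ i) (ρ (i+1)) := by
  have ho : Order.IsSuccLimit (β + omega0) := isSuccLimit_add β isSuccLimit_omega0
  set o := β + omega0 with ho'
  have step : ∀ x : {x : V // x ∈ Hseq E acc G0 o ∧ x ∉ Gseq E acc G0 o},
      ∃ y : {x : V // x ∈ Hseq E acc G0 o ∧ x ∉ Gseq E acc G0 o}, E x.1 y.1 := by
    rintro ⟨x, hxH, hxG⟩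
    obtain ⟨u, hxu, huH⟩ := Hseq_no_dead_end hfin β hxH
    refine ⟨⟨u, huH, fun huG => ?_⟩, hxu⟩
    obtain ⟨_, z, hpz, hz⟩ := (Gseq_limit_mem ho).mp huG
    exact hxG (mem_Gseq_of_reach ho hxH (hpz.head ⟨hxu, huH⟩) hz)
  obtain ⟨g, hg0, hgs⟩ := iterate_choice (⟨v, hv, hvG⟩ :
    {x : V // x ∈ Hseq E acc G0 o ∧ x ∉ Gseq E acc G0 o}) _ step
  refine ⟨fun i => (g i).1, ?_, fun i => ⟨(g i).2.1, (g i).2.2, hgs i⟩⟩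
  show (g 0).1 = v
  rw [hg0]

end limitlem

section stab
variable {V : Type*} {E : V → V → Prop} {acc : V → Prop} {G0 : Set V}
open Relation

lemma stabilize {S : Set V} {o : Ordinal} (hS : Gseq E acc G0 o = S)
    (ha : ∀ v ∈ S, ∃ u, E v u ∧ u ∈ S)
    (hb : ∀ v ∈ S, ∃ u, ReflTransGen (fun a b => E a b ∧ b ∈ S) v u ∧ acc u) :
    ∀ β, o ≤ β → Gseq E acc G0 β = S := by
  intro β
  induction β using Ordinal.induction with
  | _ β ih =>
    intro hoβ
    rcases eq_or_lt_of_le hoβ with rfl | hlt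
    · exact hS
    rcases Ordinal.zero_or_succ_or_isSuccLimit β with rfl | ⟨γ, rfl⟩ | hl
    · exact absurd hlt (by simp : ¬ o < 0)
    · have hG : Gseq E acc G0 γ = S := ih γ (Order.lt_succ γ) (Order.le_of_lt_succ hlt)
      rw [← Ordinal.add_one_eq_succ, Gseq_succ, hG]
      ext v
      constructor
      · rintro ⟨h, _⟩; exact h
      · intro hvS; exact ⟨hvS, ha v hvS⟩
    · have hH : Hseq E acc G0 β = S := by
        ext v
        constructor
        · intro h
          rw [← hS]
          exact h o hlt
        · intro hvS γ' hγ'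
          rcases le_total o γ' with h1 | h1
          · rw [ih γ' hγ' h1]; exact hvS
          · refine Gseq_antitone h1 ?_
            rw [hS]; exact hvS
      rw [Gseq_limit hl, hH]
      ext v
      constructor
      · rintro ⟨h, _⟩; exact h
      · intro hvS
        refine ⟨hvS, ?_⟩
        obtain ⟨u, hp, hu⟩ := hb v hvS
        refine ⟨u, ReflTransGen.mono ?_ _ _ hp, hu⟩
        rintro a b ⟨hab, hbS⟩
        exact ⟨hab, hbS⟩

end stab

section graded
universe uo
variable {V : Type*} {E : V → V → Prop} {acc : V → Prop} {G0 : Set V}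
open Relation

lemma ord_step_eq (k : ℕ) :
    omega0.{uo} * (k:Ordinal) + omega0.{uo} = omega0.{uo} * ((k+1 : ℕ) : Ordinal) := by
  push_cast; rw [mul_add, mul_one]

lemma ord_step_lt (k : ℕ) :
    omega0.{uo} * (k:Ordinal) + omega0.{uo} < omega0.{uo} * (((k+1):ℕ):Ordinal) + omega0.{uo} := by
  rw [ord_step_eq k, ord_step_eq (k+1)]
  exact (mul_lt_mul_iff_right₀ omega0_pos).mpr (by exact_mod_cast Nat.lt_succ_self (k+1))

lemma exists_stable (lv : V → ℕ) (hlv : ∀ v u, E v u → lv u = lv v + 1) (n : ℕ)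
    (hfs : ∀ l : ℕ, {x : V | lv x = l}.Finite)
    (hcard : ∀ l : ℕ, ({x : V | lv x = l}).ncard ≤ n) :
    ∃ k : ℕ, k ≤ n ∧
      Gseq E acc G0 (omega0.{uo} * k + omega0.{uo}) =
        Hseq E acc G0 (omega0.{uo} * k + omega0.{uo}) := by
  classical
  have hfin : ∀ v : V, {u | E v u}.Finite := fun v =>
    (hfs (lv v + 1)).subset (fun u hu => hlv v u hu)
  by_contra hc
  push_neg at hc
  have hex : ∀ k : ℕ, k ≤ n → ∃ v, v ∈ Hseq E acc G0 (omega0.{uo} * k + omega0.{uo}) ∧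
      v ∉ Gseq E acc G0 (omega0.{uo} * k + omega0.{uo}) := by
    intro k hk
    have hne := hc k hk
    have h2 : ¬ (Hseq E acc G0 (omega0.{uo} * k + omega0.{uo}) ⊆
        Gseq E acc G0 (omega0.{uo} * k + omega0.{uo})) :=
      fun h => hne (subset_antisymm Gseq_subset_Hseq h)
    exact Set.not_subset.mp h2
  obtain ⟨v0, -, -⟩ := hex 0 (Nat.zero_le n)
  have hw : ∀ k : ℕ, ∃ ρ : ℕ → V, k ≤ n →
      ∀ i, ρ i ∈ Hseq E acc G0 (omega0.{uo} * k + omega0.{uo}) ∧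
        ρ i ∉ Gseq E acc G0 (omega0.{uo} * k + omega0.{uo}) ∧ E (ρ i) (ρ (i+1)) := by
    intro k
    by_cases hk : k ≤ n
    · obtain ⟨v, hvH, hvG⟩ := hex k hk
      obtain ⟨ρ, _, hρ⟩ := inert_path (β := omega0.{uo} * k) hfin hvH hvG
      exact ⟨ρ, fun _ => hρ⟩
    · exact ⟨fun _ => v0, fun h => absurd h hk⟩
  choose ρ hρ using hw
  have hlev : ∀ k, k ≤ n → ∀ i, lv (ρ k i) = lv (ρ k 0) + i := by
    intro k hk i
    induction i with
    | zero => rfl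
    | succ i ih => rw [hlv _ _ (hρ k hk i).2.2, ih]; omega
  set l : ℕ := Finset.sup (Finset.range (n+1)) (fun k => lv (ρ k 0)) with hl
  have hlk : ∀ k, k ≤ n → lv (ρ k 0) ≤ l := fun k hk =>
    Finset.le_sup (f := fun k => lv (ρ k 0)) (Finset.mem_range.mpr (Nat.lt_succ_of_le hk))
  set slice : ℕ → Set V :=
    fun j => {x | x ∈ Hseq E acc G0 (omega0.{uo} * j + omega0.{uo}) ∧ lv x = l} with hslice
  have hfin_slice : ∀ j, (slice j).Finite := fun j => (hfs l).subset (fun x hx => hx.2)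
  have hssub : ∀ k, k ≤ n → slice (k+1) ⊂ slice k := by
    intro k hk
    have hsub : slice (k+1) ⊆ slice k := by
      rintro x ⟨hxH, hxl⟩
      exact ⟨Hseq_antitone (le_of_lt (ord_step_lt k)) hxH, hxl⟩
    refine (Set.ssubset_iff_of_subset hsub).mpr ?_
    have hx_lv : lv (ρ k (l - lv (ρ k 0))) = l := by
      rw [hlev k hk]
      have := hlk k hk
      omega
    refine ⟨ρ k (l - lv (ρ k 0)), ⟨(hρ k hk _).1, hx_lv⟩, ?_⟩
    rintro ⟨hxH', -⟩
    exact (hρ k hk _).2.1 (hxH' _ (ord_step_lt k))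
  have hcount : ∀ j, j ≤ n+1 → (slice j).ncard + j ≤ (slice 0).ncard := by
    intro j
    induction j with
    | zero => intro _; omega
    | succ j ih =>
      intro hj
      have h1 : (slice (j+1)).ncard < (slice j).ncard :=
        Set.ncard_lt_ncard (hssub j (by omega)) (hfin_slice j)
      have h2 := ih (by omega)
      omega
  have hfinal := hcount (n+1) le_rfl
  have hb : (slice 0).ncard ≤ n :=
    le_trans (Set.ncard_le_ncard (fun x hx => hx.2) (hfs l)) (hcard l)
  omega
end graded

section fair
variable {V : Type*} {E : V → V → Prop} {acc : V → Prop} {G0 : Set V}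
open Relation

lemma fair_path_of_stable {S : Set V} (ha : ∀ v ∈ S, ∃ u, E v u ∧ u ∈ S)
    (hb : ∀ v ∈ S, ∃ u, ReflTransGen (fun a b => E a b ∧ b ∈ S) v u ∧ acc u)
    {v : V} (hv : v ∈ S) :
    ∃ ρ : ℕ → V, ρ 0 = v ∧ (∀ i, ρ i ∈ S ∧ E (ρ i) (ρ (i+1))) ∧
      ∀ n, ∃ m, n ≤ m ∧ acc (ρ m) := by
  classical
  set P : V → ℕ → Prop := fun x m =>
    ∃ f : ℕ → V, f 0 = x ∧ (∀ i < m, E (f i) (f (i+1)) ∧ f (i+1) ∈ S) ∧ acc (f m) with hPdef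
  have hP : ∀ x : {x : V // x ∈ S}, ∃ m, P x.1 m := by
    rintro ⟨x, hx⟩
    obtain ⟨u, hp, hu⟩ := hb x hx
    obtain ⟨m, f, hf0, hfm, hstep⟩ := rtg_to_fun hp
    exact ⟨m, f, hf0, fun i hi => (hstep i hi), hfm ▸ hu⟩
  set d : {x : V // x ∈ S} → ℕ := fun x => Nat.find (hP x) with hd
  have step : ∀ x : {x : V // x ∈ S}, ∃ y : {x : V // x ∈ S},
      E x.1 y.1 ∧ (acc x.1 ∨ d y < d x) := by
    intro x
    obtain ⟨f, hf0, hstep, hacc⟩ := Nat.find_spec (hP x)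
    cases hdx : d x with
    | zero =>
      obtain ⟨u, hxu, huS⟩ := ha x.1 x.2
      simp only [hd] at hdx
      rw [hdx] at hacc
      rw [hf0] at hacc
      exact ⟨⟨u, huS⟩, hxu, Or.inl hacc⟩
    | succ m =>
      simp only [hd] at hdx
      rw [hdx] at hacc hstep
      have h0 := hstep 0 (Nat.succ_pos m)
      refine ⟨⟨f 1, h0.2⟩, hf0 ▸ h0.1, Or.inr ?_⟩
      have hPy : P (f 1) m := by
        refine ⟨fun i => f (i+1), rfl, fun i hi => hstep (i+1) (by omega), hacc⟩
      calc d ⟨f 1, h0.2⟩ ≤ m := Nat.find_le hPy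
      _ < m + 1 := by omega
  obtain ⟨g, hg0, hgs⟩ := iterate_choice (⟨v, hv⟩ : {x : V // x ∈ S}) _ step
  refine ⟨fun i => (g i).1, ?_, fun i => ⟨(g i).2, (hgs i).1⟩, ?_⟩
  · show (g 0).1 = v
    rw [hg0]
  intro N
  by_contra hcon
  push_neg at hcon
  have hdec : ∀ j : ℕ, d (g (N + j)) + j ≤ d (g N) := by
    intro j
    induction j with
    | zero => simp
    | succ j ih =>
      have h1 := (hgs (N + j)).2
      rcases h1 with h1 | h1
      · exact absurd h1 (hcon (N + j) (by omega))
      · have : N + (j+1) = (N + j) + 1 := by omega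
        rw [this]
        omega
  have := hdec (d (g N) + 1)
  omega

lemma fair_mem_Gseq {ρ : ℕ → V} (h0 : ∀ i, ρ i ∈ G0) (he : ∀ i, E (ρ i) (ρ (i+1)))
    (hf : ∀ n, ∃ m, n ≤ m ∧ acc (ρ m)) : ∀ α (i : ℕ), ρ i ∈ Gseq E acc G0 α := by
  intro α
  induction α using Ordinal.induction with
  | _ α ih =>
    rcases Ordinal.zero_or_succ_or_isSuccLimit α with rfl | ⟨γ, rfl⟩ | hl
    · intro i; rw [Gseq_zero]; exact h0 i
    · intro i
      rw [← Ordinal.add_one_eq_succ, Gseq_succ]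
      exact ⟨ih γ (Order.lt_succ γ) i, ρ (i+1), he i, ih γ (Order.lt_succ γ) (i+1)⟩
    · intro i
      rw [Gseq_limit_mem hl]
      refine ⟨fun β hβ => ih β hβ i, ?_⟩
      obtain ⟨m, him, hm⟩ := hf i
      exact ⟨ρ m, chain_rtg' ρ him (fun j _ _ => ⟨he j, fun β hβ => ih β hβ (j+1)⟩), hm⟩
end fair


open Ordinal in
/-- Every vertex of the run DAG has rank at most `ω²`; moreover a vertex belongs to
`H_{ω²}` iff it lies on a fair path of the run DAG. -/
theorem stmt2 {Q A : Type*} [Finite Q] (Δ : Q → A → Q → Prop) (w : ℕ → A)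
    (F : Set Q) (q0 : Q) (v : Q × ℕ) (hv : v ∈ runDag Δ w q0) :
    rankOf (dagEdge Δ w) (dagAcc F) (runDag Δ w q0) v ≤ omega0 * omega0 ∧
    (v ∈ Hseq (dagEdge Δ w) (dagAcc F) (runDag Δ w q0) (omega0 * omega0) ↔
      ∃ ρ : ℕ → Q × ℕ, ρ 0 = v ∧
        (∀ i, ρ i ∈ runDag Δ w q0 ∧ dagEdge Δ w (ρ i) (ρ (i + 1))) ∧
        ∀ n, ∃ m, n ≤ m ∧ dagAcc F (ρ m)) := by
  classical
  constructor
  · exact csSup_le' (fun α hα => hα.1.le)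
  -- grading facts
  have hlv : ∀ (x u : Q × ℕ), dagEdge Δ w x u → u.2 = x.2 + 1 := fun x u h => h.1
  have hfs : ∀ l : ℕ, {x : Q × ℕ | x.2 = l}.Finite := by
    intro l
    refine (Set.finite_range (fun q : Q => (q, l))).subset ?_
    rintro ⟨q, l'⟩ hx
    exact ⟨q, by simp only [Set.mem_setOf_eq] at hx; rw [hx]⟩
  have hcard : ∀ l : ℕ, ({x : Q × ℕ | x.2 = l}).ncard ≤ Nat.card Q := by
    intro l
    rw [← Nat.card_coe_set_eq]
    refine Nat.card_le_card_of_injective (fun x => x.1.1) ?_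
    rintro ⟨⟨q, l1⟩, h1⟩ ⟨⟨q', l2⟩, h2⟩ h
    simp only [Set.mem_setOf_eq] at h1 h2
    subst h1; subst h2
    simp only at h
    subst h
    rfl
  obtain ⟨k, -, hGH⟩ := exists_stable (E := dagEdge Δ w) (acc := dagAcc F)
    (G0 := runDag Δ w q0) Prod.snd hlv (Nat.card Q) hfs hcard
  have hfin : ∀ x : Q × ℕ, {u | dagEdge Δ w x u}.Finite := fun x =>
    (hfs (x.2 + 1)).subset (fun u hu => hlv x u hu)
  have ho : Order.IsSuccLimit (omega0 * (k : Ordinal) + omega0) := isSuccLimit_add _ isSuccLimit_omega0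
  have ha : ∀ x ∈ Gseq (dagEdge Δ w) (dagAcc F) (runDag Δ w q0) (omega0 * k + omega0),
      ∃ u, dagEdge Δ w x u ∧
        u ∈ Gseq (dagEdge Δ w) (dagAcc F) (runDag Δ w q0) (omega0 * k + omega0) := by
    intro x hx
    rw [hGH] at hx ⊢
    exact Hseq_no_dead_end hfin _ hx
  have hb : ∀ x ∈ Gseq (dagEdge Δ w) (dagAcc F) (runDag Δ w q0) (omega0 * k + omega0),
      ∃ u, Relation.ReflTransGen (fun a b => dagEdge Δ w a b ∧
        b ∈ Gseq (dagEdge Δ w) (dagAcc F) (runDag Δ w q0) (omega0 * k + omega0)) x u ∧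
        dagAcc F u := fun x hx => Gseq_limit_reach ho hx
  have hstab := stabilize (rfl :
      Gseq (dagEdge Δ w) (dagAcc F) (runDag Δ w q0) (omega0 * k + omega0) = _) ha hb
  have holt : omega0 * (k : Ordinal) + omega0 < omega0 * omega0 := by
    have h1 : omega0 * (k:Ordinal) + omega0 = omega0 * ((k+1:ℕ):Ordinal) := by
      push_cast; rw [mul_add, mul_one]
    rw [h1]
    exact (mul_lt_mul_iff_right₀ omega0_pos).mpr (nat_lt_omega0 (k+1))
  have hH2 : Hseq (dagEdge Δ w) (dagAcc F) (runDag Δ w q0) (omega0 * omega0) =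
      Gseq (dagEdge Δ w) (dagAcc F) (runDag Δ w q0) (omega0 * k + omega0) := by
    ext x
    constructor
    · intro h
      exact h _ holt
    · intro hx β hβ
      rcases le_total (omega0 * (k : Ordinal) + omega0) β with h1 | h1
      · rw [hstab β h1]; exact hx
      · exact Gseq_antitone h1 hx
  rw [hH2]
  constructor
  · intro hv2
    obtain ⟨ρ, hρ0, hρ, hfair⟩ := fair_path_of_stable ha hb hv2
    refine ⟨ρ, hρ0, fun i => ⟨?_, (hρ i).2⟩, hfair⟩
    have := (hρ i).1
    have h0 : Gseq (dagEdge Δ w) (dagAcc F) (runDag Δ w q0) (omega0 * k + omega0) ⊆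
        runDag Δ w q0 := by
      intro y hy
      have := Gseq_antitone zero_le hy
      rwa [Gseq_zero] at this
    exact h0 this
  · rintro ⟨ρ, hρ0, hρ, hfair⟩
    have := fair_mem_Gseq (fun i => (hρ i).1) (fun i => (hρ i).2) hfair
      (omega0 * k + omega0) 0
    rwa [hρ0] at this
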